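/- arXiv:2604.03930 — 3 statements merged into one kernel-verified Lean document; each statement's English description precedes it below -/
import Mathlib

section
/- Let R be a commutative ring, m ≥ 1, and c⃗ = (c₁,…,c_m) integers with each cᵢ ≥ 2. Let A⁺_{c⃗,R} be the R-subalgebra of ∏_{i=1}^m R[tᵢ]/(tᵢ^{cᵢ}) consisting of tuples with all constant terms equal, and let 𝔪 be its ideal of tuples with zero constant terms (so A⁺_{c⃗,R} = R·1 ⊕ 𝔪). If φ : A⁺_{c⃗,R} → A⁺_{c⃗,R} is an R-algebra endomorphism with φ(𝔪) ⊆ 𝔪, then φ is bijective if and only if the induced R-module endomorphism of 𝔪/𝔪² is bijective. -/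
set_option synthInstance.maxHeartbeats 1000000
set_option maxHeartbeats 2000000
open Polynomial

/-- The truncated polynomial ring `k[X]/(X^c)`. -/
abbrev TruncP (k : Type*) [CommRing k] (c : ℕ) : Type _ :=
  Polynomial k ⧸ Ideal.span {(X : Polynomial k) ^ c}

/-- The ambient product algebra `∏ i, k[tᵢ]/(tᵢ^{cᵢ})`. -/
abbrev TruncPi (k : Type*) [CommRing k] {ι : Type*} (c : ι → ℕ) : Type _ :=
  ∀ i, TruncP k (c i)

/-- The image of `X` in `TruncP k c`. -/
noncomputable def truncX (k : Type*) [CommRing k] (c : ℕ) : TruncP k c :=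
  Ideal.Quotient.mk _ X

/-- The monomial `tᵢ^j` in `∏ i, k[tᵢ]/(tᵢ^{cᵢ})`. -/
noncomputable def tpow {k : Type*} [CommRing k] {ι : Type*} [DecidableEq ι]
    (c : ι → ℕ) (i : ι) (j : ℕ) : TruncPi k c :=
  Pi.single i (truncX k (c i) ^ j)

/-- The constant term of a truncated polynomial (evaluation at `0`), for `c ≥ 1`. -/
noncomputable def constTerm (k : Type*) [CommRing k] (c : ℕ) (hc : 1 ≤ c) :
    TruncP k c →ₐ[k] k :=
  Ideal.Quotient.liftₐ _ (aeval (0 : k)) (by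
    intro a ha
    rw [Ideal.mem_span_singleton] at ha
    obtain ⟨q, rfl⟩ := ha
    have h0 : (0 : k) ^ c = 0 := zero_pow (Nat.one_le_iff_ne_zero.mp hc)
    simp [h0])

/-- `A⁺`: the subalgebra of tuples with all constant terms equal. -/
noncomputable def Aplus (k : Type*) [CommRing k] {ι : Type*} (c : ι → ℕ)
    (hc : ∀ i, 1 ≤ c i) : Subalgebra k (TruncPi k c) :=
  ⨅ (i : ι) (j : ι),
    AlgHom.equalizer
      ((constTerm k (c i) (hc i)).comp (Pi.evalAlgHom k (fun i => TruncP k (c i)) i))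
      ((constTerm k (c j) (hc j)).comp (Pi.evalAlgHom k (fun i => TruncP k (c i)) j))

/-- `m_I`: the span of the monomials `tᵢ^j`, `i ∈ I`, `1 ≤ j ≤ cᵢ - 1`. -/
noncomputable def mPart (k : Type*) [CommRing k] {ι : Type*} [DecidableEq ι]
    (c : ι → ℕ) (I : Set ι) : Submodule k (TruncPi k c) :=
  Submodule.span k {x | ∃ i ∈ I, ∃ j, 1 ≤ j ∧ j < c i ∧ x = tpow c i j}

/-- `𝔪^d`: the span of the monomials of degree at least `d`. -/
noncomputable def mPow (k : Type*) [CommRing k] {ι : Type*} [DecidableEq ι]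
    (c : ι → ℕ) (d : ℕ) : Submodule k (TruncPi k c) :=
  Submodule.span k {x | ∃ i, ∃ j, d ≤ j ∧ 1 ≤ j ∧ j < c i ∧ x = tpow c i j}

/-- Componentwise projection onto the coordinates in `I` (the projection along `m_{Iᶜ}`). -/
noncomputable def projL (k : Type*) [CommRing k] {ι : Type*} [DecidableEq ι] (c : ι → ℕ)
    (I : Finset ι) : TruncPi k c →ₗ[k] TruncPi k c where
  toFun x i := if i ∈ I then x i else 0
  map_add' x y := by funext i; by_cases h : i ∈ I <;> simp [h]
  map_smul' r x := by funext i; by_cases h : i ∈ I <;> simp [h]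

/-- Scaling `t ↦ λ·t` on `k[t]/(t^c)`, as a `k`-algebra homomorphism. -/
noncomputable def scaleHom (k : Type*) [CommRing k] (c : ℕ) (lam : k) :
    TruncP k c →ₐ[k] TruncP k c :=
  Ideal.Quotient.liftₐ _ (aeval (lam • truncX k c)) (by
    intro a ha
    rw [Ideal.mem_span_singleton] at ha
    obtain ⟨q, rfl⟩ := ha
    have hx : truncX k c ^ c = 0 := by
      show (Ideal.Quotient.mk (Ideal.span {(X : Polynomial k) ^ c}) X) ^ c = 0
      rw [← map_pow, Ideal.Quotient.eq_zero_iff_mem]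
      exact Ideal.mem_span_singleton_self _
    simp [_root_.smul_pow, hx])

/-- The torus action `tᵢ ↦ λᵢ·tᵢ` on `∏ i, k[tᵢ]/(tᵢ^{cᵢ})`. -/
noncomputable def torusHom {k : Type*} [CommRing k] {ι : Type*} (c : ι → ℕ) (lam : ι → k) :
    TruncPi k c →ₐ[k] TruncPi k c :=
  Pi.algHom k _ fun i => (scaleHom k (c i) (lam i)).comp (Pi.evalAlgHom k _ i)

/-- Restriction of a tuple to the coordinates satisfying `P`, as an algebra hom. -/
noncomputable def restrictAlg (k : Type*) [CommRing k] {ι : Type*} (c : ι → ℕ)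
    (P : ι → Prop) : TruncPi k c →ₐ[k] TruncPi k (fun i : {i // P i} => c i.1) where
  toFun x i := x i.1
  map_one' := rfl
  map_mul' _ _ := rfl
  map_zero' := rfl
  map_add' _ _ := rfl
  commutes' _ := rfl

/-- The set `k·1 ⊕ {b + b' + φ(b')}` associated to a gluing datum. -/
def graphSet {k A : Type*} [CommRing k] [CommRing A] [Algebra k A]
    (bI bI' : Submodule k A) (φ : ↥bI' →ₗ[k] A) : Set A :=
  {z | ∃ r : k, ∃ b ∈ bI, ∃ b' : ↥bI', z = r • (1 : A) + b + ↑b' + φ b'}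

section Aux
open Polynomial
variable {R : Type*} [CommRing R]

lemma truncX_pow_self (c : ℕ) : truncX R c ^ c = 0 := by
  show (Ideal.Quotient.mk (Ideal.span {(X : Polynomial R) ^ c}) X) ^ c = 0
  rw [← map_pow, Ideal.Quotient.eq_zero_iff_mem]
  exact Ideal.mem_span_singleton_self _

lemma constTerm_mk (c : ℕ) (hc : 1 ≤ c) (p : Polynomial R) :
    constTerm R c hc (Ideal.Quotient.mk _ p) = Polynomial.aeval (0 : R) p := rfl

lemma constTerm_truncX (c : ℕ) (hc : 1 ≤ c) : constTerm R c hc (truncX R c) = 0 := by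
  rw [truncX, constTerm_mk]; simp

lemma constTerm_truncX_pow (c : ℕ) (hc : 1 ≤ c) {j : ℕ} (hj : 1 ≤ j) :
    constTerm R c hc (truncX R c ^ j) = 0 := by
  rw [map_pow, constTerm_truncX, zero_pow (by omega)]

lemma sub_constTerm_mem (c : ℕ) (hc : 1 ≤ c) (y : TruncP R c) :
    y - constTerm R c hc y • 1 ∈
      Submodule.span R {x | ∃ j, 1 ≤ j ∧ j < c ∧ x = truncX R c ^ j} := by
  set S := Submodule.span R {x | ∃ j, 1 ≤ j ∧ j < c ∧ x = truncX R c ^ j} with hS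
  rcases subsingleton_or_nontrivial R with hR | hR
  · haveI := Module.subsingleton R (TruncP R c)
    have h0 : y - constTerm R c hc y • 1 = 0 := Subsingleton.elim _ _
    rw [h0]; exact S.zero_mem
  let T : Submodule R (TruncP R c) :=
    { carrier := {y | y - constTerm R c hc y • 1 ∈ S}
      add_mem' := by
        intro a b ha hb
        have h : (a + b) - constTerm R c hc (a + b) • 1
            = (a - constTerm R c hc a • 1) + (b - constTerm R c hc b • 1) := by
          rw [map_add, add_smul]; ring
        rw [Set.mem_setOf_eq, h]
        exact S.add_mem ha hb
      zero_mem' := by simp [Set.mem_setOf_eq]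
      smul_mem' := by
        intro r a ha
        have h : (r • a) - constTerm R c hc (r • a) • 1 = r • (a - constTerm R c hc a • 1) := by
          rw [map_smul, smul_sub, smul_smul, smul_eq_mul]
        rw [Set.mem_setOf_eq, h]
        exact S.smul_mem r ha }
  have hy : y ∈ T := by
    let pb := AdjoinRoot.powerBasis' (Polynomial.monic_X_pow (R := R) (n := c))
    have hspan : Submodule.span R (Set.range pb.basis) = ⊤ := pb.basis.span_eq
    have hle : Submodule.span R (Set.range pb.basis) ≤ T := by
      refine Submodule.span_le.2 ?_
      rintro _ ⟨i, rfl⟩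
      have hieq : pb.basis i = truncX R c ^ (i : ℕ) := by
        rw [pb.basis_eq_pow]
        rfl
      have hilt : (i : ℕ) < c := by
        have hd : pb.dim = c := by
          show (X ^ c : Polynomial R).natDegree = c
          exact Polynomial.natDegree_X_pow c
        exact lt_of_lt_of_le i.isLt hd.le

      show (pb.basis i : TruncP R c) ∈ T
      rw [hieq]
      show truncX R c ^ (i : ℕ) - constTerm R c hc (truncX R c ^ (i : ℕ)) • 1 ∈ S
      rcases Nat.eq_zero_or_pos (i : ℕ) with h0 | h0
      · rw [h0]; simp
      · rw [constTerm_truncX_pow c hc h0]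
        have hmem : truncX R c ^ (i : ℕ) ∈ S :=
          Submodule.subset_span ⟨(i : ℕ), h0, hilt, rfl⟩
        simpa using hmem
    exact hle (hspan ▸ Submodule.mem_top)
  exact hy

end Aux
section Aux2
open Polynomial
variable {R : Type*} [CommRing R] {m : ℕ} (c : Fin m → ℕ) (hc1 : ∀ i, 1 ≤ c i)

lemma mem_Aplus_iff (x : TruncPi R c) :
    x ∈ Aplus R c hc1 ↔
      ∀ i j, constTerm R (c i) (hc1 i) (x i) = constTerm R (c j) (hc1 j) (x j) := by
  simp only [Aplus, Algebra.mem_iInf, AlgHom.mem_equalizer, AlgHom.coe_comp,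
    Function.comp_apply, Pi.evalAlgHom_apply]

lemma mem_mPart_univ_iff (x : TruncPi R c) :
    x ∈ mPart R c Set.univ ↔ ∀ i, constTerm R (c i) (hc1 i) (x i) = 0 := by
  constructor
  · intro hx i
    let L : TruncPi R c →ₗ[R] R :=
      (constTerm R (c i) (hc1 i)).toLinearMap ∘ₗ LinearMap.proj i
    have hle : mPart R c Set.univ ≤ LinearMap.ker L := by
      rw [mPart, Submodule.span_le]
      rintro _ ⟨i', -, j, hj1, hj2, rfl⟩
      simp only [SetLike.mem_coe, LinearMap.mem_ker, L, LinearMap.coe_comp,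
        Function.comp_apply, LinearMap.proj_apply, AlgHom.toLinearMap_apply, tpow]
      by_cases h : i = i'
      · subst h
        rw [Pi.single_eq_same]
        exact constTerm_truncX_pow (c i) (hc1 i) hj1
      · rw [Pi.single_eq_of_ne h, map_zero]
    exact hle hx
  · intro hx
    have : x = ∑ i, Pi.single i (x i) := (Finset.univ_sum_single x).symm
    rw [this]
    refine Submodule.sum_mem _ fun i _ => ?_
    have hxi : x i - constTerm R (c i) (hc1 i) (x i) • 1 ∈
        Submodule.span R {z | ∃ j, 1 ≤ j ∧ j < c i ∧ z = truncX R (c i) ^ j} :=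
      sub_constTerm_mem (c i) (hc1 i) (x i)
    rw [hx i, zero_smul, sub_zero] at hxi
    have hmap := Submodule.mem_map_of_mem (f := LinearMap.single R (fun i => TruncP R (c i)) i) hxi
    rw [Submodule.map_span] at hmap
    refine Submodule.span_le.2 ?_ hmap
    rintro _ ⟨z, ⟨j, hj1, hj2, rfl⟩, rfl⟩
    exact Submodule.subset_span ⟨i, Set.mem_univ i, j, hj1, hj2, rfl⟩

end Aux2
section Aux3
open Polynomial
variable {R : Type*} [CommRing R] {m : ℕ} (c : Fin m → ℕ)

lemma constTerm_pi_apply (hc1 : ∀ i, 1 ≤ c i) (r : R) (i : Fin m) :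
    constTerm R (c i) (hc1 i) ((r • (1 : TruncPi R c)) i) = r := by
  have : (r • (1 : TruncPi R c)) i = r • (1 : TruncP R (c i)) := rfl
  rw [this, map_smul, map_one, smul_eq_mul, mul_one]

lemma mPart_le_Aplus (hc1 : ∀ i, 1 ≤ c i) : mPart R c Set.univ ≤ Subalgebra.toSubmodule (Aplus R c hc1) := by
  intro x hx
  rw [Subalgebra.mem_toSubmodule, mem_Aplus_iff]
  intro i j
  rw [(mem_mPart_univ_iff c hc1 x).1 hx i, (mem_mPart_univ_iff c hc1 x).1 hx j]

lemma mPart_mul_le (hc1 : ∀ i, 1 ≤ c i) : mPart R c Set.univ * mPart R c Set.univ ≤ mPart R c Set.univ := by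
  rw [Submodule.mul_le]
  intro a ha b hb
  rw [mem_mPart_univ_iff c hc1] at ha hb ⊢
  intro i
  have : (a * b) i = a i * b i := rfl
  rw [this, map_mul, ha i, zero_mul]

lemma mPart_pow_le (hc1 : ∀ i, 1 ≤ c i) {d : ℕ} (hd : 1 ≤ d) :
    mPart R c Set.univ ^ d ≤ mPart R c Set.univ := by
  induction d with
  | zero => omega
  | succ n ih =>
    have hps : mPart R c Set.univ ^ (n + 1) = mPart R c Set.univ ^ n * mPart R c Set.univ :=
      Submodule.pow_succ _
    rcases Nat.eq_zero_or_pos n with h | h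
    · subst h
      rw [hps, Submodule.pow_zero, Submodule.one_mul]
    · rw [hps]
      exact le_trans (Submodule.mul_le.2 fun a ha b hb => Submodule.mul_mem_mul (ih h ha) hb) (mPart_mul_le c hc1)

lemma smul_one_mem_mPart (hc1 : ∀ i, 1 ≤ c i) (hm : 1 ≤ m) {r : R} (hr : r • (1 : TruncPi R c) ∈ mPart R c Set.univ) :
    r = 0 := by
  have := (mem_mPart_univ_iff c hc1 _).1 hr ⟨0, hm⟩
  rwa [constTerm_pi_apply c hc1] at this

lemma aplus_decomp (hc1 : ∀ i, 1 ≤ c i) {x : TruncPi R c} (hm : 1 ≤ m) (hx : x ∈ Aplus R c hc1) :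
    ∃ r : R, x - r • 1 ∈ mPart R c Set.univ := by
  set i0 : Fin m := ⟨0, hm⟩
  refine ⟨constTerm R (c i0) (hc1 i0) (x i0), ?_⟩
  rw [mem_mPart_univ_iff c hc1]
  intro i
  have : (x - constTerm R (c i0) (hc1 i0) (x i0) • 1) i
      = x i - (constTerm R (c i0) (hc1 i0) (x i0) • (1 : TruncPi R c)) i := rfl
  rw [this, map_sub, constTerm_pi_apply c hc1, (mem_Aplus_iff c hc1 x).1 hx i i0, sub_self]

lemma mPart_pow_eq_bot : mPart R c Set.univ ^ (Finset.univ.sup c + 1) = ⊥ := by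
  set N := Finset.univ.sup c + 1 with hN
  set P : ℕ → Submodule R (TruncPi R c) := fun d =>
    Submodule.pi Set.univ fun i => (Ideal.span {truncX R (c i)} ^ d).restrictScalars R with hP
  have hM1 : mPart R c Set.univ ≤ P 1 := by
    rw [mPart, Submodule.span_le]
    rintro _ ⟨i, -, j, hj1, hj2, rfl⟩
    rw [SetLike.mem_coe, hP]
    refine Submodule.mem_pi.2 fun i' _ => ?_
    simp only [Submodule.restrictScalars_mem, pow_one, tpow]
    by_cases h : i' = i
    · subst h
      rw [Pi.single_eq_same, Submodule.pow_one, Ideal.mem_span_singleton]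
      exact ⟨truncX R (c i') ^ (j - 1), by rw [← pow_succ']; congr 1; omega⟩
    · rw [Pi.single_eq_of_ne h]
      exact zero_mem _
  have key : ∀ d : ℕ, 1 ≤ d → mPart R c Set.univ ^ d ≤ P d := by
    intro d hd
    induction d with
    | zero => omega
    | succ n ih =>
      have hps : mPart R c Set.univ ^ (n + 1) = mPart R c Set.univ ^ n * mPart R c Set.univ :=
        Submodule.pow_succ _
      rcases Nat.eq_zero_or_pos n with h | h
      · subst h
        rw [hps, Submodule.pow_zero, Submodule.one_mul]
        exact hM1
      · rw [hps]
        rw [Submodule.mul_le]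
        intro a ha b hb
        have ha' := ih h ha
        have hb' := hM1 hb
        refine Submodule.mem_pi.2 fun i _ => ?_
        have : (a * b) i = a i * b i := rfl
        rw [Submodule.restrictScalars_mem, this, Submodule.pow_succ]
        exact Ideal.mul_mem_mul (Submodule.mem_pi.1 ha' i trivial)
          ((by simpa [pow_one] using Submodule.mem_pi.1 hb' i trivial))
  rw [eq_bot_iff]
  refine le_trans (key N (by omega)) ?_
  intro x hx
  rw [Submodule.mem_bot]
  funext i
  have hxi := Submodule.mem_pi.1 hx i trivial
  rw [Submodule.restrictScalars_mem] at hxi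
  have hle : Ideal.span {truncX R (c i)} ^ N ≤ ⊥ := by
    rw [Ideal.span_singleton_pow, Ideal.span_le]
    have hX : truncX R (c i) ^ N = 0 := by
      have hcN : c i ≤ N := by
        rw [hN]
        exact le_trans (Finset.le_sup (Finset.mem_univ i)) (Nat.le_succ _)
      calc truncX R (c i) ^ N = truncX R (c i) ^ (c i) * truncX R (c i) ^ (N - c i) := by
            rw [← pow_add]; congr 1; omega
        _ = 0 := by rw [truncX_pow_self, zero_mul]
    simp [hX]
  have := hle hxi
  simpa using this

end Aux3
section Aux4
open Polynomial
variable {R : Type*} [CommRing R] {m : ℕ} (c : Fin m → ℕ)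

lemma mPart_fg : (mPart R c Set.univ).FG := by
  rw [mPart]
  apply Submodule.fg_span
  set N := Finset.univ.sup c with hN
  apply Set.Finite.subset (Set.finite_range (fun p : Fin m × Fin (N + 1) => tpow c p.1 p.2))
  rintro _ ⟨i, -, j, hj1, hj2, rfl⟩
  have hjN : j < N + 1 := by
    have : c i ≤ N := Finset.le_sup (Finset.mem_univ i)
    omega
  exact ⟨(i, ⟨j, hjN⟩), rfl⟩

lemma aplus_toSubmodule_eq (hc1 : ∀ i, 1 ≤ c i) (hm : 1 ≤ m) :
    Subalgebra.toSubmodule (Aplus R c hc1)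
      = Submodule.span R {(1 : TruncPi R c)} ⊔ mPart R c Set.univ := by
  apply le_antisymm
  · intro x hx
    rw [Subalgebra.mem_toSubmodule] at hx
    obtain ⟨r, hr⟩ := aplus_decomp c hc1 hm hx
    rw [Submodule.mem_sup]
    exact ⟨r • 1, Submodule.smul_mem _ r (Submodule.subset_span rfl), x - r • 1, hr, by ring⟩
  · refine sup_le ?_ (mPart_le_Aplus c hc1)
    rw [Submodule.span_le, Set.singleton_subset_iff, SetLike.mem_coe,
      Subalgebra.mem_toSubmodule]
    exact (Aplus R c hc1).one_mem

lemma aplus_fg (hc1 : ∀ i, 1 ≤ c i) (hm : 1 ≤ m) :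
    (Subalgebra.toSubmodule (Aplus R c hc1)).FG := by
  rw [aplus_toSubmodule_eq c hc1 hm]
  exact Submodule.FG.sup (Submodule.fg_span (Set.finite_singleton _)) (mPart_fg c)

end Aux4
/-- an `R`-algebra endomorphism of `A⁺` preserving the maximal ideal `𝔪` is
bijective iff the induced `R`-module endomorphism of `𝔪/𝔪²` is bijective.  Here the quotient
`𝔪/𝔪²` is presented as any `R`-module `Q` equipped with a surjection `q : 𝔪 → Q` whose
kernel is `𝔪²`, and `ψ` is the endomorphism of `Q` induced by `φ`. -/
theorem aplus_endo_bijective_iff_cotangent_bijective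
    {R : Type*} [CommRing R] {m : ℕ} (hm : 1 ≤ m)
    (c : Fin m → ℕ) (hc1 : ∀ i, 1 ≤ c i) (hc2 : ∀ i, 2 ≤ c i)
    (φ : ↥(Aplus R c hc1) →ₐ[R] ↥(Aplus R c hc1))
    (M : Submodule R (TruncPi R c))
    (hM : M = mPart R c Set.univ)
    (hφ : ∀ x : ↥(Aplus R c hc1), (x : TruncPi R c) ∈ M → (φ x : TruncPi R c) ∈ M)
    (Q : Type*) [AddCommGroup Q] [Module R Q]
    (q : ↥M →ₗ[R] Q) (hq_surj : Function.Surjective q)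
    (hq_ker : LinearMap.ker q = Submodule.comap M.subtype (M * M))
    (ψ : Q →ₗ[R] Q)
    (hψ : ∀ (x : ↥(Aplus R c hc1)) (hx : (x : TruncPi R c) ∈ M),
      ψ (q ⟨(x : TruncPi R c), hx⟩) = q ⟨(φ x : TruncPi R c), hφ x hx⟩) :
    Function.Bijective φ ↔ Function.Bijective ψ := by
  classical
  -- basic notation
  set MA : Submodule R (TruncPi R c) := Subalgebra.toSubmodule (Aplus R c hc1) with hMA_def
  have hMA : M ≤ MA := hM ▸ mPart_le_Aplus c hc1
  have hMpow_le : ∀ d : ℕ, 1 ≤ d → M ^ d ≤ M := fun d hd => hM ▸ mPart_pow_le c hc1 hd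
  have hMnil : M ^ (Finset.univ.sup c + 1) = ⊥ := hM ▸ mPart_pow_eq_bot c
  -- the linear endomorphism induced by φ on the ambient module
  set Ψ : ↥MA →ₗ[R] TruncPi R c :=
    { toFun := fun x => (φ ⟨x.1, x.2⟩ : TruncPi R c)
      map_add' := by
        intro x y
        show ((φ ((⟨x.1, x.2⟩ : ↥(Aplus R c hc1)) + ⟨y.1, y.2⟩)) : TruncPi R c)
            = (φ ⟨x.1, x.2⟩ : TruncPi R c) + (φ ⟨y.1, y.2⟩ : TruncPi R c)
        rw [map_add]
        rfl
      map_smul' := by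
        intro r x
        show ((φ (r • (⟨x.1, x.2⟩ : ↥(Aplus R c hc1)))) : TruncPi R c)
            = r • (φ ⟨x.1, x.2⟩ : TruncPi R c)
        rw [map_smul]
        rfl } with hΨ_def
  have hΨ_apply : ∀ (x : TruncPi R c) (hx : x ∈ MA), Ψ ⟨x, hx⟩ = (φ ⟨x, hx⟩ : TruncPi R c) :=
    fun x hx => rfl
  have hΨ_mul : ∀ (x y : TruncPi R c) (hx : x ∈ MA) (hy : y ∈ MA) (hxy : x * y ∈ MA),
      Ψ ⟨x * y, hxy⟩ = Ψ ⟨x, hx⟩ * Ψ ⟨y, hy⟩ := by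
    intro x y hx hy hxy
    have h : (⟨x * y, hxy⟩ : ↥(Aplus R c hc1)) = ⟨x, hx⟩ * ⟨y, hy⟩ := rfl
    rw [hΨ_apply, h, map_mul]
    rfl
  -- φ preserves all powers of M
  have hΨpow : ∀ d : ℕ, 1 ≤ d → ∀ (x : TruncPi R c) (hx : x ∈ M ^ d) (hA : x ∈ MA),
      Ψ ⟨x, hA⟩ ∈ M ^ d := by
    intro d hd
    induction d with
    | zero => omega
    | succ n ih =>
      rcases Nat.eq_zero_or_pos n with h | h
      · subst h
        intro x hx hA
        rw [Submodule.pow_one] at hx ⊢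
        exact hφ ⟨x, hA⟩ hx
      · intro x hx hA
        have hx' : x ∈ M ^ n * M := by rwa [Submodule.pow_succ] at hx
        rw [Submodule.pow_succ]
        refine Submodule.mul_induction_on'
          (C := fun z _ => ∀ hA : z ∈ MA, Ψ ⟨z, hA⟩ ∈ M ^ n * M) ?_ ?_ hx' hA
        · intro a ha b hb hA'
          have haA : a ∈ MA := hMA (hMpow_le n h ha)
          have hbA : b ∈ MA := hMA hb
          rw [hΨ_mul a b haA hbA]
          exact Submodule.mul_mem_mul (ih h a ha haA) (hφ ⟨b, hbA⟩ hb)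
        · intro u hu v hv hCu hCv hA'
          have huA : u ∈ MA := hMA (hMpow_le (n+1) (by omega) (by rw [Submodule.pow_succ]; exact hu))
          have hvA : v ∈ MA := hMA (hMpow_le (n+1) (by omega) (by rw [Submodule.pow_succ]; exact hv))
          have heq : (⟨u + v, hA'⟩ : ↥MA) = ⟨u, huA⟩ + ⟨v, hvA⟩ := rfl
          rw [heq, map_add]
          exact Submodule.add_mem _ (hCu huA) (hCv hvA)
  -- decomposition and related facts
  have hdecomp : ∀ x : ↥(Aplus R c hc1), ∃ r : R, (x : TruncPi R c) - r • 1 ∈ M := by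
    intro x
    rw [hM]
    exact aplus_decomp c hc1 hm x.2
  have hr0 : ∀ r : R, r • (1 : TruncPi R c) ∈ M → r = 0 := by
    intro r h
    rw [hM] at h
    exact smul_one_mem_mPart c hc1 hm h
  have halg : ∀ r : R, ((algebraMap R ↥(Aplus R c hc1) r : ↥(Aplus R c hc1)) : TruncPi R c)
      = r • (1 : TruncPi R c) := by
    intro r
    rw [Algebra.algebraMap_eq_smul_one]
    rfl
  -- finiteness
  haveI hMfin : Module.Finite R ↥M := Module.Finite.iff_fg.mpr (by rw [hM]; exact mPart_fg c)
  haveI hQfin : Module.Finite R Q := Module.Finite.of_surjective q hq_surj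
  haveI hAfin : Module.Finite R ↥(Aplus R c hc1) := by
    haveI h1 : Module.Finite R ↥MA := Module.Finite.iff_fg.mpr (aplus_fg c hc1 hm)
    exact Module.Finite.equiv (Subalgebra.toSubmoduleEquiv (Aplus R c hc1))
  constructor
  · -- forward direction
    intro hbij
    have hsurj : Function.Surjective ψ := by
      intro y
      obtain ⟨b, rfl⟩ := hq_surj y
      obtain ⟨a, ha⟩ := hbij.2 ⟨b.1, hMA b.2⟩
      obtain ⟨r, hr⟩ := hdecomp a
      set a0 : ↥(Aplus R c hc1) := ⟨a.1 - r • 1, hMA hr⟩ with ha0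
      have haeq : a = algebraMap R ↥(Aplus R c hc1) r + a0 := by
        apply Subtype.ext
        show (a : TruncPi R c)
          = ((algebraMap R ↥(Aplus R c hc1) r : ↥(Aplus R c hc1)) : TruncPi R c)
              + ((a : TruncPi R c) - r • 1)
        rw [halg]
        ring
      have hφa : (φ a : TruncPi R c) = r • 1 + (φ a0 : TruncPi R c) := by
        rw [haeq, map_add]
        have : ((φ (algebraMap R ↥(Aplus R c hc1) r) + φ a0 : ↥(Aplus R c hc1)) : TruncPi R c)
            = ((φ (algebraMap R ↥(Aplus R c hc1) r) : ↥(Aplus R c hc1)) : TruncPi R c)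
              + (φ a0 : TruncPi R c) := rfl
        rw [this, AlgHom.commutes, halg]
      have hφa0M : (φ a0 : TruncPi R c) ∈ M := hφ a0 hr
      have hbM : (φ a : TruncPi R c) ∈ M := by rw [ha]; exact b.2
      have hrM : r • (1 : TruncPi R c) ∈ M := by
        have h : r • (1 : TruncPi R c) = (φ a : TruncPi R c) - (φ a0 : TruncPi R c) := by
          rw [hφa]; ring
        rw [h]
        exact M.sub_mem hbM hφa0M
      have hrz : r = 0 := hr0 r hrM
      refine ⟨q ⟨(a0 : TruncPi R c), hr⟩, ?_⟩
      rw [hψ a0 hr]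
      have hval : (φ a0 : TruncPi R c) = (b : TruncPi R c) := by
        have : (b : TruncPi R c) = (φ a : TruncPi R c) := by rw [ha]
        rw [this, hφa, hrz]
        have hzs : (0 : R) • (1 : TruncPi R c) = 0 := zero_smul R (1 : TruncPi R c)
        rw [hzs, zero_add]
      have : (⟨(φ a0 : TruncPi R c), hφ a0 hr⟩ : ↥M) = b := Subtype.ext hval
      rw [this]
    exact ⟨OrzechProperty.injective_of_surjective_endomorphism ψ hsurj, hsurj⟩
  · -- backward direction
    intro hbij
    have base : ∀ x ∈ M, ∃ a : ↥MA, (a : TruncPi R c) ∈ M ∧ x - Ψ a ∈ M * M := by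
      intro b hb
      obtain ⟨y, hy⟩ := hbij.2 (q ⟨b, hb⟩)
      obtain ⟨b', rfl⟩ := hq_surj y
      have hψ' := hψ ⟨b'.1, hMA b'.2⟩ b'.2
      refine ⟨⟨b'.1, hMA b'.2⟩, b'.2, ?_⟩
      have hker : (⟨b, hb⟩ : ↥M)
          - ⟨(φ ⟨b'.1, hMA b'.2⟩ : TruncPi R c), hφ _ b'.2⟩ ∈ LinearMap.ker q := by
        rw [LinearMap.mem_ker]
        have hms : q ((⟨b, hb⟩ : ↥M)
            - ⟨(φ ⟨b'.1, hMA b'.2⟩ : TruncPi R c), hφ _ b'.2⟩)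
            = q ⟨b, hb⟩ - q ⟨(φ ⟨b'.1, hMA b'.2⟩ : TruncPi R c), hφ _ b'.2⟩ :=
          map_sub q _ _
        rw [hms, ← hψ', sub_eq_zero]
        exact hy.symm
      rw [hq_ker, Submodule.mem_comap] at hker
      exact hker
    have hG : ∀ d, 1 ≤ d →
        M ^ d ≤ Submodule.map Ψ (Submodule.comap MA.subtype (M ^ d)) + M ^ (d + 1) := by
      intro d hd
      induction d with
      | zero => omega
      | succ n ih =>
        rcases Nat.eq_zero_or_pos n with h | h
        · subst h
          intro x hx
          rw [Submodule.pow_one] at hx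
          obtain ⟨a, haM, hres⟩ := base x hx
          rw [Submodule.add_eq_sup, Submodule.mem_sup]
          refine ⟨Ψ a, Submodule.mem_map_of_mem ?_, x - Ψ a, ?_, by ring⟩
          · show (a : TruncPi R c) ∈ M ^ 1
            rwa [Submodule.pow_one]
          · show x - Ψ a ∈ M ^ 2
            have h2 : M ^ 2 = M * M := by rw [Submodule.pow_succ, Submodule.pow_one]
            rwa [h2]
        · have hstep : M ^ (n + 1) = M ^ n * M := Submodule.pow_succ _
          rw [hstep, Submodule.mul_le]
          intro u hu v hv
          have hu' := ih h hu
          rw [Submodule.add_eq_sup, Submodule.mem_sup] at hu'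
          obtain ⟨y, hy, z, hz, huv⟩ := hu'
          obtain ⟨a, haM0, rfl⟩ := hy
          have haM : (a : TruncPi R c) ∈ M ^ n := haM0
          subst huv
          obtain ⟨bv, hbvM, hbv2⟩ := base v hv
          have hab : ((a : TruncPi R c) * (bv : TruncPi R c)) ∈ MA :=
            (Aplus R c hc1).mul_mem a.2 bv.2
          have hmul : Ψ ⟨(a : TruncPi R c) * (bv : TruncPi R c), hab⟩ = Ψ a * Ψ bv :=
            hΨ_mul _ _ a.2 bv.2 hab
          have hexp : (Ψ a + z) * v
              = Ψ ⟨(a : TruncPi R c) * (bv : TruncPi R c), hab⟩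
                + (Ψ a * (v - Ψ bv) + z * v) := by
            rw [hmul]; ring
          rw [hexp]
          rw [Submodule.add_eq_sup, Submodule.mem_sup]
          refine ⟨_, Submodule.mem_map_of_mem ?_, _, ?_, rfl⟩
          · rw [Submodule.mem_comap]
            show (a : TruncPi R c) * (bv : TruncPi R c) ∈ M ^ (n + 1)
            rw [Submodule.pow_succ]
            exact Submodule.mul_mem_mul haM hbvM
          · -- Ψ a * (v - Ψ bv) + z * v ∈ M ^ (n + 2)
            have hΨa : Ψ a ∈ M ^ n := hΨpow n h _ haM a.2
            have h1 : Ψ a * (v - Ψ bv) ∈ M ^ n * (M * M) :=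
              Submodule.mul_mem_mul hΨa hbv2
            have he : M ^ n * (M * M) = M ^ (n + 1 + 1) := by
              rw [Submodule.pow_succ, Submodule.pow_succ]
              exact (mul_assoc (M ^ n) M M).symm
            rw [he] at h1
            have h2 : z * v ∈ M ^ (n + 1 + 1) := by
              rw [Submodule.pow_succ]
              exact Submodule.mul_mem_mul hz hv
            exact Submodule.add_mem _ h1 h2
    have hchain : ∀ n : ℕ, ∀ b ∈ M, ∃ a : ↥MA,
        (a : TruncPi R c) ∈ M ∧ b - Ψ a ∈ M ^ (n + 1) := by
      intro n
      induction n with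
      | zero =>
        intro b hb
        refine ⟨0, by simp, ?_⟩
        rw [map_zero, sub_zero]
        show b ∈ M ^ 1
        rwa [Submodule.pow_one]
      | succ n ih =>
        intro b hb
        obtain ⟨a, haM, hres⟩ := ih b hb
        have hmem := hG (n + 1) (by omega) hres
        rw [Submodule.add_eq_sup, Submodule.mem_sup] at hmem
        obtain ⟨y, hy, z, hz, heq⟩ := hmem
        obtain ⟨a', ha'M0, rfl⟩ := hy
        have ha'M : (a' : TruncPi R c) ∈ M ^ (n + 1) := ha'M0
        refine ⟨a + a', ?_, ?_⟩
        · show (a : TruncPi R c) + (a' : TruncPi R c) ∈ M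
          exact M.add_mem haM (hMpow_le (n + 1) (by omega) ha'M)
        · rw [map_add]
          have h : b - (Ψ a + Ψ a') = (b - Ψ a) - Ψ a' := by ring
          rw [h, ← heq]
          simpa using hz
    have hφsurj : Function.Surjective φ := by
      intro x
      obtain ⟨r, hr⟩ := hdecomp x
      obtain ⟨a, haM, hres⟩ := hchain (Finset.univ.sup c) _ hr
      rw [hMnil, Submodule.mem_bot, sub_eq_zero] at hres
      refine ⟨algebraMap R ↥(Aplus R c hc1) r + ⟨(a : TruncPi R c), a.2⟩, ?_⟩
      apply Subtype.ext
      have hsplit : ((φ (algebraMap R ↥(Aplus R c hc1) r + ⟨(a : TruncPi R c), a.2⟩)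
            : ↥(Aplus R c hc1)) : TruncPi R c)
          = ((φ (algebraMap R ↥(Aplus R c hc1) r) : ↥(Aplus R c hc1)) : TruncPi R c)
            + (φ ⟨(a : TruncPi R c), a.2⟩ : TruncPi R c) := by
        rw [map_add]; rfl
      rw [hsplit, AlgHom.commutes, halg]
      have hΨval : (φ ⟨(a : TruncPi R c), a.2⟩ : TruncPi R c) = Ψ a := rfl
      rw [hΨval, ← hres]
      ring
    have hφinj : Function.Injective φ := by
      have h := OrzechProperty.injective_of_surjective_endomorphism φ.toLinearMap hφsurj
      exact h
    exact ⟨hφinj, hφsurj⟩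
end

section
/- Let g ≥ 0 and m ≥ 1 be integers with 3g > m, and set s = g + m. Define β = 0 if s ≡ 0 (mod 4), β = 1 if s is odd, and β = 4 if s ≡ 2 (mod 4). Then for every integer k ≥ m one has 8·(2k − m − g)·(s − k) ≤ s² − β, and there exists an integer k ≥ m for which equality holds. (Equivalently, the maximum over integers k ≥ m of (2k − m − g)(g + m − k) equals (s² − β)/8.) -/
private lemma sq_one_le (x : ℤ) (h : x ≠ 0) : 1 ≤ x ^ 2 := by
  rcases lt_or_gt_of_ne h with h' | h' <;> nlinarith

private lemma key_id (g m k : ℤ) :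
    8 * ((2 * k - m - g) * ((g + m) - k)) = (g + m) ^ 2 - (4 * k - 3 * (g + m)) ^ 2 := by
  ring

/-- for `3g > m` and `s = g + m`, the maximum of `(2k - m - g)(s - k)` over
integers `k ≥ m` equals `(s² - β)/8`, where `β = 0, 1, 4` according to
`s ≡ 0 (mod 4)`, `s` odd, `s ≡ 2 (mod 4)` respectively. -/
theorem spine_max_dimension_case_3g_gt_m
    (g m s β : ℤ) (hg : 0 ≤ g) (hm : 1 ≤ m) (h3g : m < 3 * g) (hs : s = g + m)
    (hβ0 : s % 4 = 0 → β = 0)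
    (hβodd : Odd s → β = 1)
    (hβ2 : s % 4 = 2 → β = 4) :
    (∀ k : ℤ, m ≤ k → 8 * ((2 * k - m - g) * (s - k)) ≤ s ^ 2 - β) ∧
    (∃ k : ℤ, m ≤ k ∧ 8 * ((2 * k - m - g) * (s - k)) = s ^ 2 - β) := by
  subst hs
  have hmod : (g + m) % 4 = 0 ∨ (g + m) % 4 = 1 ∨ (g + m) % 4 = 2 ∨ (g + m) % 4 = 3 := by
    omega
  constructor
  · intro k hk
    have hkey := key_id g m k
    have hβle : β ≤ (4 * k - 3 * (g + m)) ^ 2 := by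
      rcases hmod with h | h | h | h
      · rw [hβ0 h]; positivity
      · rw [hβodd (Int.odd_iff.mpr (by omega))]
        exact sq_one_le _ (by omega)
      · rw [hβ2 h]
        obtain ⟨y, hy1, hy2⟩ : ∃ y : ℤ, 4 * k - 3 * (g + m) = 2 * y ∧ y ≠ 0 :=
          ⟨(4 * k - 3 * (g + m)) / 2, by omega, by omega⟩
        rw [hy1]
        nlinarith [sq_one_le y hy2]
      · rw [hβodd (Int.odd_iff.mpr (by omega))]
        exact sq_one_le _ (by omega)
    linarith
  · rcases hmod with h | h | h | h
    · refine ⟨3 * ((g + m) / 4), by omega, ?_⟩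
      have hkey := key_id g m (3 * ((g + m) / 4))
      have he : 4 * (3 * ((g + m) / 4)) - 3 * (g + m) = 0 := by omega
      rw [he] at hkey
      rw [hβ0 h]
      simpa using hkey
    · refine ⟨(3 * (g + m) + 1) / 4, by omega, ?_⟩
      have hkey := key_id g m ((3 * (g + m) + 1) / 4)
      have he : 4 * ((3 * (g + m) + 1) / 4) - 3 * (g + m) = 1 := by omega
      rw [he] at hkey
      rw [hβodd (Int.odd_iff.mpr (by omega))]
      norm_num at hkey
      linarith
    · refine ⟨(3 * (g + m) - 2) / 4, by omega, ?_⟩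
      have hkey := key_id g m ((3 * (g + m) - 2) / 4)
      have he : 4 * ((3 * (g + m) - 2) / 4) - 3 * (g + m) = -2 := by omega
      rw [he] at hkey
      rw [hβ2 h]
      norm_num at hkey
      linarith
    · refine ⟨(3 * (g + m) - 1) / 4, by omega, ?_⟩
      have hkey := key_id g m ((3 * (g + m) - 1) / 4)
      have he : 4 * ((3 * (g + m) - 1) / 4) - 3 * (g + m) = -1 := by omega
      rw [he] at hkey
      rw [hβodd (Int.odd_iff.mpr (by omega))]
      norm_num at hkey
      linarith
end

section
/- Fix a field k, c⃗ = (c₁,…,c_m), and a partition {1,…,m} = I₁ ⊔ I₂ into nonempty subsets. Let B ⊆ A⁺_{c⃗} be a k-subalgebra of corank g, with 𝔪_B = B ∩ 𝔪. For j = 1, 2 let g_j = dim_k(m_{I_j}/π_{I_j}(𝔪_B)) and set γ = g − g₁ − g₂. Let J₁ = 𝔪_B ∩ m_{I₂} and J₂ = 𝔪_B ∩ m_{I₁}. Then J₁ ∩ J₂ = 0 and dim_k(B/(J₁ + J₂)) = γ + 1. -/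
set_option synthInstance.maxHeartbeats 1000000
set_option maxHeartbeats 2000000
open Polynomial

namespace GluingAux

variable {k : Type*} [Field k]

instance truncPFinite (c : ℕ) : Module.Finite k (TruncP k c) :=
  (AdjoinRoot.powerBasis' (monic_X_pow (n := c))).finite

lemma constTerm_mk (c : ℕ) (hc : 1 ≤ c) (p : Polynomial k) :
    constTerm k c hc (Ideal.Quotient.mk _ p) = p.eval 0 := by
  show (aeval (0 : k)) p = p.eval 0
  simp [aeval_def, eval]

lemma constTerm_truncX_pow (c : ℕ) (hc : 1 ≤ c) {j : ℕ} (hj : 1 ≤ j) :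
    constTerm k c hc (truncX k c ^ j) = 0 := by
  rw [map_pow, truncX, constTerm_mk]
  simp [zero_pow (by omega : j ≠ 0)]

lemma truncX_pow_self (c : ℕ) : truncX k c ^ c = 0 := by
  rw [truncX, ← map_pow, Ideal.Quotient.eq_zero_iff_mem]
  exact Ideal.mem_span_singleton_self _

lemma mem_span_truncX_pow (c : ℕ) (hc : 1 ≤ c) (z : TruncP k c)
    (hz : constTerm k c hc z = 0) :
    z ∈ Submodule.span k {x : TruncP k c | ∃ j, 1 ≤ j ∧ j < c ∧ x = truncX k c ^ j} := by
  obtain ⟨p, rfl⟩ := Ideal.Quotient.mk_surjective z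
  rw [constTerm_mk] at hz
  have hrep : (Ideal.Quotient.mk (Ideal.span {(X : Polynomial k) ^ c})) p
      = ∑ n ∈ p.support, p.coeff n • truncX k c ^ n := by
    conv_lhs => rw [p.as_sum_support]
    rw [map_sum]
    refine Finset.sum_congr rfl fun n _ => ?_
    rw [← C_mul_X_pow_eq_monomial, map_mul, map_pow, truncX]
    exact (Algebra.smul_def (p.coeff n)
      ((Ideal.Quotient.mk (Ideal.span {(X : Polynomial k) ^ c})) X ^ n)).symm
  rw [hrep]
  refine Submodule.sum_mem _ fun n hn => ?_
  rcases Nat.eq_zero_or_pos n with h0 | h1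
  · subst h0
    have : p.coeff 0 = 0 := by rwa [coeff_zero_eq_eval_zero]
    simp [this]
  · rcases lt_or_ge n c with hlt | hge
    · exact Submodule.smul_mem _ _ (Submodule.subset_span ⟨n, h1, hlt, rfl⟩)
    · have : truncX k c ^ n = 0 := by
        rw [show n = c + (n - c) by omega, pow_add, truncX_pow_self, zero_mul]
      simp [this]

lemma mem_Aplus_iff {ι : Type*} (c : ι → ℕ) (hc : ∀ i, 1 ≤ c i) (x : TruncPi k c) :
    x ∈ Aplus k c hc ↔
      ∀ i j, constTerm k (c i) (hc i) (x i) = constTerm k (c j) (hc j) (x j) := by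
  simp [Aplus, Algebra.mem_iInf, AlgHom.mem_equalizer]

variable {ι : Type*} [Fintype ι] [DecidableEq ι] (c : ι → ℕ)

lemma projL_apply (I : Finset ι) (x : TruncPi k c) (i : ι) :
    projL k c I x i = if i ∈ I then x i else 0 := rfl

lemma projL_tpow (I : Finset ι) (i : ι) (j : ℕ) :
    projL k c I (tpow c i j) = if i ∈ I then tpow c i j else 0 := by
  by_cases hi : i ∈ I
  · simp only [hi, if_true]
    funext i'
    rw [projL_apply]
    by_cases h' : i' ∈ I
    · simp [h']
    · have : i' ≠ i := fun h => h' (h ▸ hi)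
      simp [h', tpow, Pi.single_apply, this]
  · simp only [hi, if_false]
    funext i'
    rw [projL_apply]
    by_cases h' : i' ∈ I
    · have : i' ≠ i := fun h => hi (h ▸ h')
      simp [h', tpow, Pi.single_apply, this]
    · simp [h']

lemma map_projL_mPart (I : Finset ι) (S : Set ι) :
    Submodule.map (projL k c I) (mPart k c S) ≤ mPart k c (↑I : Set ι) := by
  rw [mPart, Submodule.map_span, Submodule.span_le]
  rintro _ ⟨x, ⟨i, _, j, hj1, hjc, rfl⟩, rfl⟩
  rw [projL_tpow]
  split
  · exact Submodule.subset_span ⟨i, by simpa, j, hj1, hjc, rfl⟩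
  · exact zero_mem _

lemma projL_eq_self_of_mem (I : Finset ι) {x : TruncPi k c}
    (hx : x ∈ mPart k c (↑I : Set ι)) : projL k c I x = x := by
  have hle : mPart k c (↑I : Set ι) ≤ LinearMap.ker (projL k c I - LinearMap.id) := by
    rw [mPart, Submodule.span_le]
    rintro _ ⟨i, hi, j, hj1, hjc, rfl⟩
    have hi' : i ∈ I := hi
    simp [LinearMap.mem_ker, projL_tpow, hi', sub_eq_zero]
  have := hle hx
  rw [LinearMap.mem_ker, LinearMap.sub_apply, LinearMap.id_apply, sub_eq_zero] at this
  exact this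

lemma apply_eq_zero_of_mem_mPart (I : Finset ι) {x : TruncPi k c}
    (hx : x ∈ mPart k c (↑I : Set ι)) {i : ι} (hi : i ∉ I) : x i = 0 := by
  rw [← projL_eq_self_of_mem c I hx, projL_apply, if_neg hi]

lemma projL_add_compl (I : Finset ι) (x : TruncPi k c) :
    projL k c I x + projL k c Iᶜ x = x := by
  funext i
  by_cases h : i ∈ I <;> simp [projL_apply, h, Finset.mem_compl]

lemma projL_eq_zero_of_mem_compl (I : Finset ι) {x : TruncPi k c}
    (hx : x ∈ mPart k c (↑(Iᶜ) : Set ι)) : projL k c I x = 0 := by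
  have hle : mPart k c (↑(Iᶜ) : Set ι) ≤ LinearMap.ker (projL k c I) := by
    rw [mPart, Submodule.span_le]
    rintro _ ⟨i, hi, j, hj1, hjc, rfl⟩
    have hi' : i ∉ I := by simpa [Finset.mem_compl] using hi
    simp [LinearMap.mem_ker, projL_tpow, hi']
  exact hle hx

lemma projL_eq_zero_iff (I : Finset ι) {x : TruncPi k c}
    (hx : x ∈ mPart k c (Set.univ : Set ι)) :
    projL k c I x = 0 ↔ x ∈ mPart k c (↑(Iᶜ) : Set ι) := by
  constructor
  · intro h
    have := projL_add_compl c I x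
    rw [h, zero_add] at this
    rw [← this]
    exact map_projL_mPart c Iᶜ _ ⟨x, hx, rfl⟩
  · exact projL_eq_zero_of_mem_compl c I

lemma mPart_inf_compl (I : Finset ι) :
    mPart k c (↑I : Set ι) ⊓ mPart k c (↑(Iᶜ) : Set ι) = ⊥ := by
  rw [eq_bot_iff]
  rintro x ⟨hx1, hx2⟩
  simp only [Submodule.mem_bot]
  funext i
  by_cases h : i ∈ I
  · exact apply_eq_zero_of_mem_mPart c Iᶜ hx2 (by simpa [Finset.mem_compl])
  · exact apply_eq_zero_of_mem_mPart c I hx1 h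

lemma mPart_univ_eq_sup (I : Finset ι) :
    mPart k c (Set.univ : Set ι) = mPart k c (↑I : Set ι) ⊔ mPart k c (↑(Iᶜ) : Set ι) := by
  apply le_antisymm
  · rw [mPart, Submodule.span_le]
    rintro _ ⟨i, _, j, hj1, hjc, rfl⟩
    by_cases h : i ∈ I
    · exact le_sup_left (α := Submodule k (TruncPi k c))
        (Submodule.subset_span ⟨i, h, j, hj1, hjc, rfl⟩)
    · exact le_sup_right (α := Submodule k (TruncPi k c))
        (Submodule.subset_span ⟨i, by simpa [Finset.mem_compl], j, hj1, hjc, rfl⟩)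
  · apply sup_le <;>
    · rw [mPart, Submodule.span_le]
      rintro _ ⟨i, _, j, hj1, hjc, rfl⟩
      exact Submodule.subset_span ⟨i, trivial, j, hj1, hjc, rfl⟩

lemma constTerm_apply_eq_zero_of_mem_mPart (hc : ∀ i, 1 ≤ c i) (S : Set ι)
    {x : TruncPi k c} (hx : x ∈ mPart k c S) (i : ι) :
    constTerm k (c i) (hc i) (x i) = 0 := by
  have hle : mPart k c S ≤ LinearMap.ker
      ((constTerm k (c i) (hc i)).toLinearMap ∘ₗ LinearMap.proj i) := by
    rw [mPart, Submodule.span_le]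
    rintro _ ⟨i', _, j, hj1, hjc, rfl⟩
    simp only [SetLike.mem_coe, LinearMap.mem_ker, LinearMap.comp_apply, LinearMap.proj_apply,
      AlgHom.toLinearMap_apply]
    by_cases h : i = i'
    · subst h
      simp [tpow, constTerm_truncX_pow (c i) (hc i) hj1]
    · simp [tpow, Pi.single_apply, Ne.symm h]
  exact hle hx

lemma sub_constTerm_mem (hc : ∀ i, 1 ≤ c i) (i₀ : ι) {x : TruncPi k c}
    (hx : x ∈ Aplus k c hc) :
    x - (constTerm k (c i₀) (hc i₀) (x i₀)) • 1 ∈ mPart k c (Set.univ : Set ι) := by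
  set ε := constTerm k (c i₀) (hc i₀) (x i₀) with hε
  have hcoord : ∀ i, constTerm k (c i) (hc i) ((x - ε • 1) i) = 0 := by
    intro i
    have h1 : ((x - ε • 1) i) = x i - ε • (1 : TruncP k (c i)) := rfl
    rw [h1, map_sub, map_smul, map_one]
    have := (mem_Aplus_iff c hc x).mp hx i i₀
    rw [this, ← hε]
    simp
  set y := x - ε • 1 with hy
  have hdecomp : y = ∑ i, Pi.single i (y i) := (Finset.univ_sum_single y).symm
  rw [hdecomp]
  refine Submodule.sum_mem _ fun i _ => ?_
  have hyi := mem_span_truncX_pow (c i) (hc i) (y i) (hcoord i)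
  have : Pi.single i (y i) = LinearMap.single k (fun i => TruncP k (c i)) i (y i) := rfl
  rw [this]
  have hmap : Submodule.map (LinearMap.single k (fun i => TruncP k (c i)) i)
      (Submodule.span k {z : TruncP k (c i) | ∃ j, 1 ≤ j ∧ j < c i ∧ z = truncX k (c i) ^ j})
      ≤ mPart k c (Set.univ : Set ι) := by
    rw [Submodule.map_span, Submodule.span_le]
    rintro _ ⟨z, ⟨j, hj1, hjc, rfl⟩, rfl⟩
    exact Submodule.subset_span ⟨i, trivial, j, hj1, hjc, rfl⟩
  exact hmap ⟨y i, hyi, rfl⟩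

lemma tpow_mem_Aplus (hc : ∀ i, 1 ≤ c i) (i : ι) {j : ℕ} (hj : 1 ≤ j) :
    tpow c i j ∈ Aplus k c hc := by
  rw [mem_Aplus_iff]
  intro a b
  have key : ∀ a, constTerm k (c a) (hc a) (tpow c i j a) = 0 := by
    intro a
    by_cases h : a = i
    · subst h
      simp [tpow, constTerm_truncX_pow (c a) (hc a) hj]
    · simp [tpow, Pi.single_apply, h]
  rw [key a, key b]

lemma mPart_le_Aplus (hc : ∀ i, 1 ≤ c i) (S : Set ι) :
    mPart k c S ≤ Subalgebra.toSubmodule (Aplus k c hc) := by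
  rw [mPart, Submodule.span_le]
  rintro _ ⟨i, _, j, hj1, hjc, rfl⟩
  exact tpow_mem_Aplus c hc i hj1

lemma one_ne_zero' (hc : ∀ i, 1 ≤ c i) (i₀ : ι) : (1 : TruncPi k c) ≠ 0 := by
  intro h
  have h1 : constTerm k (c i₀) (hc i₀) ((1 : TruncPi k c) i₀) = 1 := map_one _
  rw [h] at h1
  simp at h1

lemma span_one_inf_mPart (hc : ∀ i, 1 ≤ c i) (i₀ : ι) :
    Submodule.span k {(1 : TruncPi k c)} ⊓ mPart k c (Set.univ : Set ι) = ⊥ := by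
  rw [eq_bot_iff]
  intro x hx
  rw [Submodule.mem_inf] at hx
  obtain ⟨hx1, hx2⟩ := hx
  rw [Submodule.mem_span_singleton] at hx1
  obtain ⟨r, rfl⟩ := hx1
  have := constTerm_apply_eq_zero_of_mem_mPart c hc Set.univ hx2 i₀
  have h1 : ((r • (1 : TruncPi k c)) i₀) = r • (1 : TruncP k (c i₀)) := rfl
  rw [h1, map_smul, map_one, smul_eq_mul, mul_one] at this
  subst this
  simp

end GluingAux


/-- for a corank-`g` subalgebra `B` of `A⁺`, with restrictions to the two
sets of branches of coranks `g₁, g₂` and gluing genus `γ = g - g₁ - g₂`, the ideals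
`J₁ = 𝔪_B ∩ m_{I₂}` and `J₂ = 𝔪_B ∩ m_{I₁}` of the two restrictions satisfy `J₁ ∩ J₂ = 0`
and `dim B/(J₁ + J₂) = γ + 1` (stated as `dim(J₁ ⊔ J₂) + (γ + 1) = dim B`). -/
theorem gluing_genus_intersection
    {k : Type*} [Field k] {m : ℕ} (c : Fin m → ℕ) (hc : ∀ i, 1 ≤ c i)
    (I₁ : Finset (Fin m)) (h1 : I₁.Nonempty) (h2 : I₁ᶜ.Nonempty)
    (B : Subalgebra k (TruncPi k c)) (hB : B ≤ Aplus k c hc)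
    (g g₁ g₂ γ : ℕ)
    (hg : Module.finrank k ↥B + g = Module.finrank k ↥(Aplus k c hc))
    (hg1 : Module.finrank k ↥(Submodule.map (projL k c I₁)
        (Subalgebra.toSubmodule B ⊓ mPart k c Set.univ)) + g₁
      = Module.finrank k ↥(mPart k c (↑I₁ : Set (Fin m))))
    (hg2 : Module.finrank k ↥(Submodule.map (projL k c I₁ᶜ)
        (Subalgebra.toSubmodule B ⊓ mPart k c Set.univ)) + g₂
      = Module.finrank k ↥(mPart k c (↑(I₁ᶜ) : Set (Fin m))))
    (hγ : g = g₁ + g₂ + γ) :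
    let mB : Submodule k (TruncPi k c) := Subalgebra.toSubmodule B ⊓ mPart k c Set.univ
    let J₁ : Submodule k (TruncPi k c) := mB ⊓ mPart k c ↑(I₁ᶜ)
    let J₂ : Submodule k (TruncPi k c) := mB ⊓ mPart k c ↑I₁
    J₁ ⊓ J₂ = ⊥ ∧
    Module.finrank k ↥(J₁ ⊔ J₂) + (γ + 1) = Module.finrank k ↥B := by
  classical
  haveI : FiniteDimensional k (TruncPi k c) := inferInstance
  obtain ⟨i₀, hi₀⟩ := h1
  obtain ⟨M, hM⟩ : ∃ M : Submodule k (TruncPi k c),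
      M = Subalgebra.toSubmodule B ⊓ mPart k c Set.univ := ⟨_, rfl⟩
  obtain ⟨K₁, hK₁⟩ : ∃ K : Submodule k (TruncPi k c),
      K = M ⊓ mPart k c (↑(I₁ᶜ) : Set (Fin m)) := ⟨_, rfl⟩
  obtain ⟨K₂, hK₂⟩ : ∃ K : Submodule k (TruncPi k c),
      K = M ⊓ mPart k c (↑I₁ : Set (Fin m)) := ⟨_, rfl⟩
  intro mB J₁ J₂
  have e1 : J₁ = K₁ := by rw [hK₁, hM]
  have e2 : J₂ = K₂ := by rw [hK₂, hM]
  rw [e1, e2]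
  rw [← hM] at hg1 hg2
  have hMle : M ≤ mPart k c (Set.univ : Set (Fin m)) := hM ▸ inf_le_right
  have hMleB : M ≤ Subalgebra.toSubmodule B := hM ▸ inf_le_left
  have hK₁le : K₁ ≤ M := hK₁ ▸ inf_le_left
  have hK₂le : K₂ ≤ M := hK₂ ▸ inf_le_left
  have hdisj : mPart k c (↑I₁ : Set (Fin m)) ⊓ mPart k c (↑(I₁ᶜ) : Set (Fin m)) = ⊥ :=
    GluingAux.mPart_inf_compl c I₁
  -- Part 1
  have part1 : K₁ ⊓ K₂ = ⊥ := by
    rw [eq_bot_iff, ← hdisj, hK₁, hK₂]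
    intro x hx
    rw [Submodule.mem_inf] at hx
    exact ⟨(Submodule.mem_inf.mp hx.2).2, (Submodule.mem_inf.mp hx.1).2⟩
  refine ⟨part1, ?_⟩
  -- decomposition of B
  have hBsub : Subalgebra.toSubmodule B = Submodule.span k {(1 : TruncPi k c)} ⊔ M := by
    apply le_antisymm
    · intro b hb
      have hbA : b ∈ Aplus k c hc := hB hb
      set ε := constTerm k (c i₀) (hc i₀) (b i₀) with hε
      have hmem := GluingAux.sub_constTerm_mem c hc i₀ hbA
      have hbB : b - ε • 1 ∈ Subalgebra.toSubmodule B :=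
        sub_mem hb (Submodule.smul_mem _ _ (one_mem B))
      have hrw : b = ε • 1 + (b - ε • 1) := by abel
      rw [hrw]
      refine Submodule.add_mem _
        (Submodule.mem_sup_left (Submodule.mem_span_singleton.mpr ⟨ε, rfl⟩))
        (Submodule.mem_sup_right ?_)
      rw [hM, Submodule.mem_inf]
      exact ⟨hbB, hmem⟩
    · refine sup_le ?_ hMleB
      rw [Submodule.span_le, Set.singleton_subset_iff]
      exact one_mem B
  -- decomposition of Aplus
  have hAsub : Subalgebra.toSubmodule (Aplus k c hc)
      = Submodule.span k {(1 : TruncPi k c)} ⊔ mPart k c (Set.univ : Set (Fin m)) := by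
    apply le_antisymm
    · intro b hb
      set ε := constTerm k (c i₀) (hc i₀) (b i₀) with hε
      have hmem := GluingAux.sub_constTerm_mem c hc i₀ hb
      have hrw : b = ε • 1 + (b - ε • 1) := by abel
      rw [hrw]
      exact Submodule.add_mem _
        (Submodule.mem_sup_left (Submodule.mem_span_singleton.mpr ⟨ε, rfl⟩))
        (Submodule.mem_sup_right hmem)
    · refine sup_le ?_ (GluingAux.mPart_le_Aplus c hc _)
      rw [Submodule.span_le, Set.singleton_subset_iff]
      exact one_mem (Aplus k c hc)
  have h1dim : Module.finrank k ↥(Submodule.span k {(1 : TruncPi k c)}) = 1 :=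
    finrank_span_singleton (GluingAux.one_ne_zero' c hc i₀)
  have hinf1 : Submodule.span k {(1 : TruncPi k c)} ⊓ mPart k c (Set.univ : Set (Fin m)) = ⊥ :=
    GluingAux.span_one_inf_mPart c hc i₀
  have hinfB : Submodule.span k {(1 : TruncPi k c)} ⊓ M = ⊥ := by
    rw [eq_bot_iff, ← hinf1]
    exact inf_le_inf_left _ hMle
  have hdimB : Module.finrank k ↥B = 1 + Module.finrank k ↥M := by
    have h := Submodule.finrank_sup_add_finrank_inf_eq
      (Submodule.span k {(1 : TruncPi k c)}) M
    rw [hinfB, finrank_bot, add_zero, h1dim] at h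
    show Module.finrank k ↥(Subalgebra.toSubmodule B) = 1 + Module.finrank k ↥M
    rw [hBsub, h]
  have hdimA : Module.finrank k ↥(Aplus k c hc)
      = 1 + Module.finrank k ↥(mPart k c (Set.univ : Set (Fin m))) := by
    have h := Submodule.finrank_sup_add_finrank_inf_eq
      (Submodule.span k {(1 : TruncPi k c)}) (mPart k c (Set.univ : Set (Fin m)))
    rw [hinf1, finrank_bot, add_zero, h1dim] at h
    show Module.finrank k ↥(Subalgebra.toSubmodule (Aplus k c hc)) = _
    rw [hAsub, h]
  have hdimM : Module.finrank k ↥(mPart k c (Set.univ : Set (Fin m)))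
      = Module.finrank k ↥(mPart k c (↑I₁ : Set (Fin m)))
        + Module.finrank k ↥(mPart k c (↑(I₁ᶜ) : Set (Fin m))) := by
    have h := Submodule.finrank_sup_add_finrank_inf_eq
      (mPart k c (↑I₁ : Set (Fin m))) (mPart k c (↑(I₁ᶜ) : Set (Fin m)))
    rw [hdisj, finrank_bot, add_zero] at h
    rw [GluingAux.mPart_univ_eq_sup c I₁, h]
  -- rank-nullity for projL I₁
  have hrn1 : Module.finrank k ↥(Submodule.map (projL k c I₁) M)
      + Module.finrank k ↥K₁ = Module.finrank k ↥M := by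
    letI iG : AddCommGroup ↥M := inferInstance
    letI iMod : Module k ↥M := inferInstance
    letI iFD : FiniteDimensional k ↥M := inferInstance
    letI iG2 : AddCommGroup ↥(LinearMap.ker ((projL k c I₁).domRestrict M)) :=
      Submodule.addCommGroup _
    letI iM2 : Module k ↥(LinearMap.ker ((projL k c I₁).domRestrict M)) :=
      Submodule.module _
    letI iG3 : AddCommGroup ↥(Submodule.comap M.subtype K₁) := Submodule.addCommGroup _
    letI iM3 : Module k ↥(Submodule.comap M.subtype K₁) := Submodule.module _
    have h : Module.finrank k ↥(LinearMap.range ((projL k c I₁).domRestrict M))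
        + Module.finrank k ↥(LinearMap.ker ((projL k c I₁).domRestrict M))
        = Module.finrank k ↥M := LinearMap.finrank_range_add_finrank_ker _
    have hr : LinearMap.range ((projL k c I₁).domRestrict M)
        = Submodule.map (projL k c I₁) M := LinearMap.range_domRestrict M _
    have hk : LinearMap.ker ((projL k c I₁).domRestrict M)
        = Submodule.comap M.subtype K₁ := by
      ext x
      rw [LinearMap.mem_ker, LinearMap.domRestrict_apply, Submodule.mem_comap,
        Submodule.subtype_apply, GluingAux.projL_eq_zero_iff c I₁ (hMle x.2), hK₁,
        Submodule.mem_inf]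
      exact ⟨fun h' => ⟨x.2, h'⟩, fun h' => h'.2⟩
    have hkK : Module.finrank k ↥(LinearMap.ker ((projL k c I₁).domRestrict M))
        = Module.finrank k ↥K₁ :=
      LinearEquiv.finrank_eq ((LinearEquiv.ofEq _ _ hk).trans
        (Submodule.comapSubtypeEquivOfLe hK₁le))
    rw [hr, hkK] at h
    exact h
  -- rank-nullity for projL I₁ᶜ
  have hrn2 : Module.finrank k ↥(Submodule.map (projL k c I₁ᶜ) M)
      + Module.finrank k ↥K₂ = Module.finrank k ↥M := by
    letI iG : AddCommGroup ↥M := inferInstance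
    letI iMod : Module k ↥M := inferInstance
    letI iFD : FiniteDimensional k ↥M := inferInstance
    letI iG2 : AddCommGroup ↥(LinearMap.ker ((projL k c I₁ᶜ).domRestrict M)) :=
      Submodule.addCommGroup _
    letI iM2 : Module k ↥(LinearMap.ker ((projL k c I₁ᶜ).domRestrict M)) :=
      Submodule.module _
    letI iG3 : AddCommGroup ↥(Submodule.comap M.subtype K₂) := Submodule.addCommGroup _
    letI iM3 : Module k ↥(Submodule.comap M.subtype K₂) := Submodule.module _
    have h : Module.finrank k ↥(LinearMap.range ((projL k c I₁ᶜ).domRestrict M))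
        + Module.finrank k ↥(LinearMap.ker ((projL k c I₁ᶜ).domRestrict M))
        = Module.finrank k ↥M := LinearMap.finrank_range_add_finrank_ker _
    have hr : LinearMap.range ((projL k c I₁ᶜ).domRestrict M)
        = Submodule.map (projL k c I₁ᶜ) M := LinearMap.range_domRestrict M _
    have hccc : (↑(I₁ᶜᶜ) : Set (Fin m)) = (↑I₁ : Set (Fin m)) := by rw [compl_compl]
    have hk : LinearMap.ker ((projL k c I₁ᶜ).domRestrict M)
        = Submodule.comap M.subtype K₂ := by
      ext x
      rw [LinearMap.mem_ker, LinearMap.domRestrict_apply, Submodule.mem_comap,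
        Submodule.subtype_apply, GluingAux.projL_eq_zero_iff c I₁ᶜ (hMle x.2), hccc, hK₂,
        Submodule.mem_inf]
      exact ⟨fun h' => ⟨x.2, h'⟩, fun h' => h'.2⟩
    have hkK : Module.finrank k ↥(LinearMap.ker ((projL k c I₁ᶜ).domRestrict M))
        = Module.finrank k ↥K₂ :=
      LinearEquiv.finrank_eq ((LinearEquiv.ofEq _ _ hk).trans
        (Submodule.comapSubtypeEquivOfLe hK₂le))
    rw [hr, hkK] at h
    exact h
  have hsup : Module.finrank k ↥(K₁ ⊔ K₂)
      = Module.finrank k ↥K₁ + Module.finrank k ↥K₂ := by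
    have h := Submodule.finrank_sup_add_finrank_inf_eq K₁ K₂
    rw [part1, finrank_bot, add_zero] at h
    exact h
  rw [hsup, hdimB]
  omega
end
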